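/- arXiv:2604.19904 — 7 statements merged into one kernel-verified Lean document; each statement's English description precedes it below -/
import Mathlib

section
/- Let T, N_g be positive integers, let b_1, …, b_{N_g} be nonzero vectors in ℂ^T, and let b̂_n = b_n/‖b_n‖ be the corresponding unit vectors. Define d_min = 1 − max_{i≠j} |b̂_i^H b̂_j|². Fix k ∈ {1,…,N_g}, a nonzero scalar α ∈ ℂ, and a noise vector z ∈ ℂ^T, and set y = α b_k + z. If |b̂_l^H z| < (1/2)|α|‖b_k‖(1 − √(1 − d_min)) for every l ∈ {1,…,N_g}, then |b̂_l^H y| < |b̂_k^H y| for every l ≠ k; i.e., the maximum-likelihood decoder, which outputs argmax_n |b̂_n^H y|², correctly recovers the index k. -/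
/-- Correctness of the maximum-likelihood decoder under the
noise condition involving the minimum subspace distance. -/
theorem stmt_0 (T Ng : ℕ) (hT : 0 < T) (hNg : 0 < Ng)
    (b : Fin Ng → EuclideanSpace ℂ (Fin T)) (hb : ∀ n, b n ≠ 0)
    (bhat : Fin Ng → EuclideanSpace ℂ (Fin T))
    (hbhat : ∀ n, bhat n = ‖b n‖⁻¹ • b n)
    (dmin : ℝ)
    (hdmin : dmin = 1 - sSup {x : ℝ | ∃ i j : Fin Ng, i ≠ j ∧
        x = ‖(inner ℂ (bhat i) (bhat j) : ℂ)‖ ^ 2})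
    (k : Fin Ng) (α : ℂ) (hα : α ≠ 0)
    (z y : EuclideanSpace ℂ (Fin T)) (hy : y = α • b k + z)
    (hz : ∀ l : Fin Ng, ‖(inner ℂ (bhat l) z : ℂ)‖ <
        (1 / 2) * ‖α‖ * ‖b k‖ * (1 - Real.sqrt (1 - dmin))) :
    ∀ l : Fin Ng, l ≠ k → ‖(inner ℂ (bhat l) y : ℂ)‖ < ‖(inner ℂ (bhat k) y : ℂ)‖ := by
  intro l hl
  have hbkpos : (0:ℝ) < ‖b k‖ := norm_pos_iff.mpr (hb k)
  have hαpos : (0:ℝ) < ‖α‖ := norm_pos_iff.mpr hα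
  set c : ℝ := ‖α‖ * ‖b k‖ with hc
  have hcpos : 0 < c := mul_pos hαpos hbkpos
  have hunit : ∀ n, ‖bhat n‖ = 1 := by
    intro n
    rw [hbhat, norm_smul, norm_inv, norm_norm,
      inv_mul_cancel₀ (norm_pos_iff.mpr (hb n)).ne']
  have hinb : ∀ n, (inner ℂ (bhat n) (b k) : ℂ) = (‖b k‖ : ℂ) * inner ℂ (bhat n) (bhat k) := by
    intro n
    conv_rhs => rw [hbhat k]
    rw [← Complex.coe_smul, inner_smul_right, ← mul_assoc,
      ← Complex.ofReal_mul, mul_inv_cancel₀ hbkpos.ne', Complex.ofReal_one, one_mul]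
  have hiky : (inner ℂ (bhat k) y : ℂ) = α * ‖b k‖ + inner ℂ (bhat k) z := by
    rw [hy, inner_add_right, inner_smul_right, hinb]
    have h1 : (inner ℂ (bhat k) (bhat k) : ℂ) = 1 := by
      rw [inner_self_eq_norm_sq_to_K, hunit]; norm_num
    rw [h1]; ring
  have hily : (inner ℂ (bhat l) y : ℂ)
      = α * ‖b k‖ * inner ℂ (bhat l) (bhat k) + inner ℂ (bhat l) z := by
    rw [hy, inner_add_right, inner_smul_right, hinb]; ring
  set ρ : ℝ := ‖(inner ℂ (bhat l) (bhat k) : ℂ)‖ with hρ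
  set S : Set ℝ := {x : ℝ | ∃ i j : Fin Ng, i ≠ j ∧
      x = ‖(inner ℂ (bhat i) (bhat j) : ℂ)‖ ^ 2} with hS
  have hmem : ρ ^ 2 ∈ S := ⟨l, k, hl, rfl⟩
  have hbdd : BddAbove S := by
    refine ⟨1, ?_⟩
    rintro x ⟨i, j, hij, rfl⟩
    have h1 : ‖(inner ℂ (bhat i) (bhat j) : ℂ)‖ ≤ 1 := by
      have := norm_inner_le_norm (𝕜 := ℂ) (bhat i) (bhat j)
      rwa [hunit, hunit, one_mul] at this
    nlinarith [norm_nonneg (inner ℂ (bhat i) (bhat j) : ℂ)]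
  have hsup : ρ ^ 2 ≤ 1 - dmin := by
    have := le_csSup hbdd hmem
    rw [hdmin]; linarith
  set s : ℝ := Real.sqrt (1 - dmin) with hs
  have hρs : ρ ≤ s := by
    have h1 : ρ = Real.sqrt (ρ ^ 2) := (Real.sqrt_sq (norm_nonneg _)).symm
    rw [h1, hs]
    exact Real.sqrt_le_sqrt hsup
  have hcnorm : ‖α * (‖b k‖ : ℂ)‖ = c := by
    rw [norm_mul, Complex.norm_real, Real.norm_eq_abs, abs_of_pos hbkpos]
  have hlow : c - ‖(inner ℂ (bhat k) z : ℂ)‖ ≤ ‖(inner ℂ (bhat k) y : ℂ)‖ := by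
    rw [hiky]
    have h := norm_sub_norm_le (α * (‖b k‖ : ℂ)) (-(inner ℂ (bhat k) z : ℂ))
    simp only [norm_neg, sub_neg_eq_add] at h
    rw [hcnorm] at h
    linarith
  have hup : ‖(inner ℂ (bhat l) y : ℂ)‖ ≤ c * ρ + ‖(inner ℂ (bhat l) z : ℂ)‖ := by
    rw [hily]
    refine (norm_add_le _ _).trans ?_
    have : ‖α * (‖b k‖ : ℂ) * inner ℂ (bhat l) (bhat k)‖ = c * ρ := by
      rw [norm_mul, hcnorm]
    rw [this]
  have hzl := hz l
  have hzk := hz k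
  have hB : (1 / 2) * ‖α‖ * ‖b k‖ * (1 - s) = c * (1 - s) / 2 := by
    rw [hc]; ring
  rw [hB] at hzl hzk
  nlinarith [hρs, hcpos, hlow, hup, hzl, hzk]
end

section
/- Let T ≥ 1, N_g ≥ 2, and let B = [b_1,…,b_{N_g}] ∈ {−1,+1}^{T×N_g} be a BPSK codebook with minimum Hamming distance d_min^Ham, maximum Hamming distance d_max^Ham > 0, and ratio ρ = d_min^Ham / d_max^Ham ∈ (0,1]. Then the minimum subspace distance satisfies 1 − max_{i≠j} |b_i^T b_j|²/T² ≤ 1 − ((1−ρ)/(1+ρ))². -/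
open scoped Classical

/-- For a BPSK codebook with min/max Hamming distance ratio
`ρ = d_min^Ham / d_max^Ham ∈ (0,1]`, the minimum subspace distance satisfies
`1 − max_{i≠j} |bᵢᵀbⱼ|²/T² ≤ 1 − ((1−ρ)/(1+ρ))²`. -/
theorem stmt_6 (T Ng : ℕ) (hT : 1 ≤ T) (hNg : 2 ≤ Ng)
    (b : Fin Ng → Fin T → ℝ) (hb : ∀ i t, b i t = 1 ∨ b i t = -1)
    (hne : (Finset.univ : Finset (Fin Ng)).offDiag.Nonempty)
    (dHam : Fin Ng → Fin Ng → ℕ)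
    (hdHam : ∀ i j, dHam i j = (Finset.univ.filter (fun t => b i t ≠ b j t)).card)
    (dmin dmax : ℕ)
    (hdmin : dmin = (Finset.univ : Finset (Fin Ng)).offDiag.inf' hne
        (fun p => dHam p.1 p.2))
    (hdmax : dmax = (Finset.univ : Finset (Fin Ng)).offDiag.sup' hne
        (fun p => dHam p.1 p.2))
    (hdmaxpos : 0 < dmax)
    (ρ : ℝ) (hρ : ρ = (dmin : ℝ) / (dmax : ℝ))
    (hρ0 : 0 < ρ) (hρ1 : ρ ≤ 1) :
    1 - (Finset.univ : Finset (Fin Ng)).offDiag.sup' hne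
          (fun p => |∑ t, b p.1 t * b p.2 t| ^ 2 / (T : ℝ) ^ 2) ≤
      1 - ((1 - ρ) / (1 + ρ)) ^ 2 := by
  have hT0 : (0:ℝ) < T := by exact_mod_cast Nat.lt_of_lt_of_le Nat.zero_lt_one hT
  have hdmax0 : (0:ℝ) < dmax := by exact_mod_cast hdmaxpos
  set c : ℝ := (1 - ρ)/(1 + ρ) with hc
  have hρpos : (0:ℝ) < 1 + ρ := by linarith
  have hc0 : 0 ≤ c := by apply div_nonneg <;> linarith
  have hinner : ∀ i j, ∑ t, b i t * b j t = (T:ℝ) - 2 * (dHam i j : ℝ) := by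
    intro i j
    have key : ∀ t, b i t * b j t = if b i t = b j t then (1:ℝ) else -1 := by
      intro t
      rcases hb i t with h1|h1 <;> rcases hb j t with h2|h2 <;> simp [h1, h2] <;> norm_num
    have hsplit := Finset.card_filter_add_card_filter_not
      (s := (Finset.univ : Finset (Fin T))) (p := fun t => b i t = b j t)
    simp only [Finset.card_univ, Fintype.card_fin] at hsplit
    have hd : dHam i j = (Finset.univ.filter (fun t => ¬ (b i t = b j t))).card := by
      rw [hdHam i j]
    calc ∑ t, b i t * b j t
        = ∑ t, (if b i t = b j t then (1:ℝ) else -1) :=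
          Finset.sum_congr rfl fun t _ => key t
      _ = ((Finset.univ.filter (fun t => b i t = b j t)).card : ℝ) * 1
          + ((Finset.univ.filter (fun t => ¬ (b i t = b j t))).card : ℝ) * (-1) := by
          rw [Finset.sum_ite, Finset.sum_const, Finset.sum_const]
          push_cast
          ring
      _ = (T:ℝ) - 2 * (dHam i j : ℝ) := by
          rw [← hd]
          have : ((Finset.univ.filter (fun t => b i t = b j t)).card : ℝ)
              = (T:ℝ) - (dHam i j : ℝ) := by
            rw [hd]
            have := hsplit
            push_cast [← this]
            ring
          rw [this]; ring
  suffices h : c^2 ≤ (Finset.univ : Finset (Fin Ng)).offDiag.sup' hne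
      (fun p => |∑ t, b p.1 t * b p.2 t| ^ 2 / (T : ℝ) ^ 2) by linarith
  have hkey : c ≤ 1 - 2*(dmin:ℝ)/T ∨ c ≤ 2*(dmax:ℝ)/T - 1 := by
    by_contra hcon
    push_neg at hcon
    obtain ⟨h1, h2⟩ := hcon
    have hx : ρ * (dmax:ℝ) = dmin := by
      rw [hρ]; field_simp
    have hc' : c * (1+ρ) = 1 - ρ := by
      rw [hc]; field_simp
    have h1a : 1 - c < 2*(dmin:ℝ)/T := by linarith
    have h2a : 2*(dmax:ℝ)/T < 1 + c := by linarith
    have h1' : (1 - c) * T < 2 * (dmin:ℝ) := (lt_div_iff₀ hT0).mp h1a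
    have h2' : 2 * (dmax:ℝ) < (1 + c) * T := (div_lt_iff₀ hT0).mp h2a
    nlinarith [mul_pos hT0 hdmax0, h1', h2', mul_pos hρ0 hdmax0,
      mul_lt_mul_of_pos_right h2' hρ0, mul_lt_mul_of_pos_right h1' hdmax0,
      mul_lt_mul_of_pos_right h2' (mul_pos hρ0 hT0)]
  rcases hkey with h | h
  · obtain ⟨p, hp, hpe⟩ := Finset.exists_mem_eq_inf' hne (fun p => dHam p.1 p.2)
    have hle := Finset.le_sup' (fun p : Fin Ng × Fin Ng =>
      |∑ t, b p.1 t * b p.2 t| ^ 2 / (T : ℝ) ^ 2) hp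
    refine le_trans ?_ hle
    have hd : (dHam p.1 p.2 : ℝ) = (dmin : ℝ) := by
      norm_cast; rw [hdmin, hpe]
    simp only [hinner p.1 p.2, hd]
    have habs : c ≤ |(T:ℝ) - 2*(dmin:ℝ)| / T := by
      refine le_trans ?_ (div_le_div_of_nonneg_right (le_abs_self _) hT0.le)
      rw [sub_div]
      rw [div_self (ne_of_gt hT0)]
      linarith [h]
    calc c^2 ≤ (|(T:ℝ) - 2*(dmin:ℝ)| / T)^2 := by
          exact pow_le_pow_left₀ hc0 habs 2
      _ = |(T:ℝ) - 2*(dmin:ℝ)|^2 / (T:ℝ)^2 := by rw [div_pow]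
  · obtain ⟨p, hp, hpe⟩ := Finset.exists_mem_eq_sup' hne (fun p => dHam p.1 p.2)
    have hle := Finset.le_sup' (fun p : Fin Ng × Fin Ng =>
      |∑ t, b p.1 t * b p.2 t| ^ 2 / (T : ℝ) ^ 2) hp
    refine le_trans ?_ hle
    have hd : (dHam p.1 p.2 : ℝ) = (dmax : ℝ) := by
      norm_cast; rw [hdmax, hpe]
    simp only [hinner p.1 p.2, hd]
    have habs : c ≤ |(T:ℝ) - 2*(dmax:ℝ)| / T := by
      refine le_trans ?_ (div_le_div_of_nonneg_right (neg_le_abs _) hT0.le)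
      rw [neg_sub, sub_div, div_self (ne_of_gt hT0)]
      linarith [h]
    calc c^2 ≤ (|(T:ℝ) - 2*(dmax:ℝ)| / T)^2 := by
          exact pow_le_pow_left₀ hc0 habs 2
      _ = |(T:ℝ) - 2*(dmax:ℝ)|^2 / (T:ℝ)^2 := by rw [div_pow]
end

section
/- (Welch bound) Let T ≥ 1 and N > T, and let v_1, …, v_N ∈ ℂ^T be unit vectors (‖v_i‖ = 1 for all i). Then max_{i≠j} |v_i^H v_j|² ≥ (N − T)/(T(N − 1)). Equivalently, the minimum subspace distance 1 − max_{i≠j} |v_i^H v_j|² is at most 1 − (N − T)/(T(N − 1)). -/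
set_option maxHeartbeats 1000000

private theorem welch_sum_swap4 {α : Type*} [AddCommMonoid α] (T N : ℕ)
    (F : Fin N → Fin N → Fin T → Fin T → α) :
    ∑ i, ∑ j, ∑ s, ∑ t, F i j s t = ∑ s, ∑ t, ∑ j, ∑ i, F i j s t := by
  rw [Finset.sum_comm]
  conv_lhs => enter [2, j]; rw [Finset.sum_comm]
  conv_lhs => enter [2, j, 2, s]; rw [Finset.sum_comm]
  rw [Finset.sum_comm]
  conv_lhs => enter [2, s]; rw [Finset.sum_comm]

/-- Welch bound: For `N > T` unit vectors in `ℂ^T`, some distinct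
pair satisfies `|vᵢᴴvⱼ|² ≥ (N − T)/(T(N − 1))`; equivalently the minimum subspace
distance is at most `1 − (N − T)/(T(N − 1))`. -/
theorem stmt_9 (T N : ℕ) (hT : 1 ≤ T) (hN : T < N)
    (v : Fin N → EuclideanSpace ℂ (Fin T)) (hv : ∀ i, ‖v i‖ = 1) :
    ∃ i j : Fin N, i ≠ j ∧
      ((N : ℝ) - T) / (T * ((N : ℝ) - 1)) ≤ ‖(inner ℂ (v i) (v j) : ℂ)‖ ^ 2 ∧
      1 - ‖(inner ℂ (v i) (v j) : ℂ)‖ ^ 2 ≤ 1 - ((N : ℝ) - T) / (T * ((N : ℝ) - 1)) := by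
  classical
  set g : Fin N → Fin N → ℂ := fun i j => inner ℂ (v i) (v j) with hg
  set A : Fin T → Fin T → ℂ := fun s t => ∑ i, v i s * (starRingEnd ℂ) (v i t) with hA
  -- numeric facts
  have ht0 : (0:ℝ) < T := by exact_mod_cast hT
  have htn : (T:ℝ) < N := by exact_mod_cast hN
  have hn2 : (2:ℝ) ≤ N := by
    have : 2 ≤ N := by omega
    exact_mod_cast this
  have hn1 : (0:ℝ) < (N:ℝ) - 1 := by linarith
  -- unit norms in coordinates
  have hunit : ∀ i, ∑ s, Complex.normSq (v i s) = 1 := by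
    intro i
    have h := hv i
    rw [EuclideanSpace.norm_eq] at h
    have h' : ∑ s, ‖v i s‖ ^ 2 = 1 := Real.sqrt_eq_one.mp h
    calc ∑ s, Complex.normSq (v i s) = ∑ s, ‖v i s‖ ^ 2 :=
          Finset.sum_congr rfl fun s _ => by rw [Complex.normSq_eq_norm_sq]
      _ = 1 := h'
  -- the key complex identity
  have hC : (∑ i, ∑ j, (g i j * (starRingEnd ℂ) (g i j)))
      = ∑ s, ∑ t, (A s t * (starRingEnd ℂ) (A s t)) := by
    simp only [hg, hA, PiLp.inner_apply, RCLike.inner_apply, map_sum, map_mul, Complex.conj_conj,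
      Finset.sum_mul_sum, Finset.mul_sum, Finset.sum_mul]
    rw [welch_sum_swap4]
    refine Finset.sum_congr rfl fun s _ => Finset.sum_congr rfl fun t _ =>
      Finset.sum_congr rfl fun j _ => Finset.sum_congr rfl fun i _ => ?_
    ring
  have hR : (∑ i, ∑ j, ‖g i j‖ ^ 2) = ∑ s, ∑ t, Complex.normSq (A s t) := by
    have h1 := hC
    simp only [Complex.mul_conj] at h1
    have h2 : ((∑ i, ∑ j, Complex.normSq (g i j) : ℝ) : ℂ)
        = ((∑ s, ∑ t, Complex.normSq (A s t) : ℝ) : ℂ) := by push_cast; exact h1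
    have h3 := Complex.ofReal_inj.mp h2
    calc (∑ i, ∑ j, ‖g i j‖ ^ 2) = ∑ i, ∑ j, Complex.normSq (g i j) := by
          simp [Complex.normSq_eq_norm_sq]
      _ = _ := h3
  set r : Fin T → ℝ := fun s => ∑ i, Complex.normSq (v i s) with hr
  have hrsum : ∑ s, r s = N := by
    rw [hr, Finset.sum_comm]
    simp [hunit]
  have hAdiag : ∀ s, A s s = (r s : ℂ) := by
    intro s
    rw [hA, hr]
    push_cast
    simp [Complex.mul_conj]
  have hdiag_le : ∑ s, (r s) ^ 2 ≤ ∑ s, ∑ t, Complex.normSq (A s t) := by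
    refine Finset.sum_le_sum fun s _ => ?_
    have h1 : (r s) ^ 2 = Complex.normSq (A s s) := by
      rw [hAdiag, Complex.normSq_ofReal, sq]
    rw [h1]
    exact Finset.single_le_sum (fun t _ => Complex.normSq_nonneg _) (Finset.mem_univ s)
  have hCS : (N:ℝ) ^ 2 ≤ T * ∑ s, (r s) ^ 2 := by
    have h := sq_sum_le_card_mul_sum_sq (s := (Finset.univ : Finset (Fin T))) (f := r)
    simpa [hrsum, Finset.card_univ] using h
  have key : (N:ℝ) ^ 2 / T ≤ ∑ i, ∑ j, ‖g i j‖ ^ 2 := by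
    rw [hR, div_le_iff₀ ht0]
    nlinarith [hdiag_le, hCS]
  -- off-diagonal extraction
  set f : Fin N × Fin N → ℝ := fun p => ‖g p.1 p.2‖ ^ 2 with hf
  set P : Finset (Fin N × Fin N) := Finset.univ.filter (fun p => ¬ p.1 = p.2) with hP
  set D : Finset (Fin N × Fin N) := Finset.univ.filter (fun p => p.1 = p.2) with hD
  have hDeq : D = (Finset.univ : Finset (Fin N)).diag := by
    ext p
    simp [hD, Finset.mem_diag]
  have hfd : ∀ i : Fin N, f (i, i) = 1 := by
    intro i
    have h1 : (inner ℂ (v i) (v i) : ℂ) = 1 := by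
      rw [inner_self_eq_norm_sq_to_K, hv i]
      norm_num
    simp only [hf, hg, h1]
    norm_num
  have hDsum : ∑ p ∈ D, f p = N := by
    rw [hDeq, Finset.sum_diag]
    simp [hfd]
  have hsplit : ∑ p ∈ D, f p + ∑ p ∈ P, f p = ∑ p, f p :=
    Finset.sum_filter_add_sum_filter_not _ _ _
  have htot : ∑ p, f p = ∑ i, ∑ j, ‖g i j‖ ^ 2 := by
    rw [← Finset.univ_product_univ, Finset.sum_product]
  have hPsum : (N:ℝ) ^ 2 / T - N ≤ ∑ p ∈ P, f p := by
    have := hsplit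
    rw [htot, hDsum] at this
    linarith [key]
  have hDcard : D.card = N := by
    rw [hDeq, Finset.diag_card, Finset.card_univ, Fintype.card_fin]
  have hPcard : P.card = N * N - N := by
    have h := Finset.card_filter_add_card_filter_not
      (s := (Finset.univ : Finset (Fin N × Fin N))) (p := fun p => p.1 = p.2)
    rw [Finset.card_univ] at h
    simp only [Fintype.card_prod, Fintype.card_fin] at h
    have : D.card + P.card = N * N := h
    omega
  have hPcast : (P.card : ℝ) = (N:ℝ) * N - N := by
    rw [hPcard]
    have hle : N ≤ N * N := Nat.le_mul_of_pos_left N (by omega)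
    push_cast [Nat.cast_sub hle]
    ring
  have hconst : ∑ _p ∈ P, ((N : ℝ) - T) / (T * ((N : ℝ) - 1)) ≤ ∑ p ∈ P, f p := by
    rw [Finset.sum_const, nsmul_eq_mul, hPcast]
    have heq : ((N:ℝ) * N - N) * (((N : ℝ) - T) / (T * ((N : ℝ) - 1)))
        = (N:ℝ) ^ 2 / T - N := by
      field_simp
    rw [heq]
    exact hPsum
  have hne : P.Nonempty := by
    refine ⟨(⟨0, by omega⟩, ⟨1, by omega⟩), ?_⟩
    simp [hP, Fin.ext_iff]
  obtain ⟨p, hpP, hpc⟩ := Finset.exists_le_of_sum_le hne hconst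
  have hpne : p.1 ≠ p.2 := by
    have := (Finset.mem_filter.mp hpP).2
    exact this
  have hpc' : ((N : ℝ) - T) / (T * ((N : ℝ) - 1)) ≤ ‖(inner ℂ (v p.1) (v p.2) : ℂ)‖ ^ 2 := hpc
  exact ⟨p.1, p.2, hpne, hpc', by linarith⟩
end

section
/- Let T ≥ 2, N_g = T² − 1, and let Ω = {d_1,…,d_T} be a set of T integers that is a Sidon set modulo N_g: for all indices (i,j) ≠ (m,n) with i ≠ j and m ≠ n, the differences d_i − d_j and d_m − d_n are incongruent modulo N_g, and no difference d_i − d_j with i ≠ j is ≡ 0 mod N_g. Then for every integer p with p ≢ 0 (mod N_g), the exponential sum satisfies |Σ_{t=1}^{T} e^{2πi d_t p / N_g}|² ≤ 2T − 1. -/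
open Finset


/-- For a Sidon set modulo `N_g = T² − 1` of size `T`, the exponential
sum satisfies `|Σ_t e^{2πi d_t p/N_g}|² ≤ 2T − 1` for every `p ≢ 0 (mod N_g)`. -/
theorem stmt_11 (T : ℕ) (hT : 2 ≤ T) (Ng : ℕ) (hNg : Ng = T ^ 2 - 1)
    (d : Fin T → ℤ)
    (hSidon0 : ∀ i j : Fin T, i ≠ j → ¬ ((Ng : ℤ) ∣ (d i - d j)))
    (hSidon : ∀ i j m n : Fin T, i ≠ j → m ≠ n → (i, j) ≠ (m, n) →
      ¬ (d i - d j ≡ d m - d n [ZMOD (Ng : ℤ)])) :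
    ∀ p : ℤ, ¬ ((Ng : ℤ) ∣ p) →
      ‖(∑ t : Fin T,
          Complex.exp (2 * Real.pi * Complex.I * ((d t : ℂ) * (p : ℂ)) / (Ng : ℂ)))‖ ^ 2 ≤
        2 * (T : ℝ) - 1 := by
  intro p hp
  have hTT : T ^ 2 = T * T := sq T
  have hT4 : 4 ≤ T ^ 2 := by nlinarith
  have hNg3 : 3 ≤ Ng := by omega
  haveI : NeZero Ng := ⟨by omega⟩
  have hNC : (Ng : ℂ) ≠ 0 := Nat.cast_ne_zero.mpr (by omega)
  have hNR : (Ng : ℝ) ≠ 0 := Nat.cast_ne_zero.mpr (by omega)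
  set c : ℂ := 2 * Real.pi * Complex.I * p / Ng with hc
  set g : ℤ → ℂ := fun a => Complex.exp (c * a) with hg
  -- the key real form of c * a
  have hform : ∀ a : ℤ, c * a = ((2 * Real.pi * p * a / Ng : ℝ) : ℂ) * Complex.I := by
    intro a
    rw [hc]
    push_cast
    field_simp
  have hgadd : ∀ a b : ℤ, g (a + b) = g a * g b := by
    intro a b
    simp only [hg, Int.cast_add, mul_add, Complex.exp_add]
  have hgper : ∀ a b : ℤ, (Ng : ℤ) ∣ (a - b) → g a = g b := by
    intro a b ⟨k, hk⟩
    have ha : a = b + Ng * k := by linarith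
    rw [ha, hgadd]
    have h1 : g ((Ng : ℤ) * k) = 1 := by
      simp only [hg]
      have : c * (((Ng : ℤ) * k : ℤ) : ℂ) = (p * k : ℤ) * (2 * Real.pi * Complex.I) := by
        rw [hc]
        push_cast
        field_simp
      rw [this, Complex.exp_int_mul_two_pi_mul_I]
    rw [h1, mul_one]
  have habsg : ∀ a : ℤ, ‖g a‖ = 1 := by
    intro a
    simp only [hg]
    rw [hform a, Complex.norm_exp_ofReal_mul_I]
  have hconjg : ∀ a : ℤ, (starRingEnd ℂ) (g a) = g (-a) := by
    intro a
    simp only [hg]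
    rw [← Complex.exp_conj]
    congr 1
    rw [hform a, hform (-a)]
    simp only [map_mul, Complex.conj_ofReal, Complex.conj_I]
    push_cast
    ring
  set G : ZMod Ng → ℂ := fun r => g r.val with hG
  have hgG : ∀ a : ℤ, g a = G ((a : ZMod Ng)) := by
    intro a
    refine hgper a _ ?_
    rw [← ZMod.intCast_zmod_eq_zero_iff_dvd]
    push_cast
    rw [ZMod.natCast_rightInverse (a : ZMod Ng)]
    ring
  -- geometric sum: total sum over all residues is 0
  have hx1 : Complex.exp c ≠ 1 := by
    intro h
    rw [Complex.exp_eq_one_iff] at h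
    obtain ⟨n, hn⟩ := h
    apply hp
    refine ⟨n, ?_⟩
    have hpi : (2 * (Real.pi : ℂ) * Complex.I) ≠ 0 := by
      simp [Real.pi_ne_zero, Complex.I_ne_zero]
    rw [hc] at hn
    field_simp at hn
    have : (p : ℂ) = (Ng : ℂ) * n := by
      apply mul_left_cancel₀ hpi
      rw [show 2 * (Real.pi : ℂ) * Complex.I * ((Ng:ℂ) * n) = (n:ℂ) * (2 * Real.pi * Complex.I) * Ng by ring]
      linear_combination (2 * (Real.pi : ℂ) * Complex.I) * hn
    exact_mod_cast this
  have hxN : (Complex.exp c) ^ Ng = 1 := by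
    rw [← Complex.exp_nat_mul]
    have : (Ng : ℂ) * c = (p : ℤ) * (2 * Real.pi * Complex.I) := by
      rw [hc]; field_simp
    rw [this, Complex.exp_int_mul_two_pi_mul_I]
  have hsumrange : ∑ k ∈ range Ng, g k = 0 := by
    have h2 : ∀ k ∈ range Ng, g (k : ℤ) = (Complex.exp c) ^ k := by
      intro k _
      simp only [hg]
      rw [← Complex.exp_nat_mul]
      push_cast
      ring_nf
    rw [Finset.sum_congr rfl h2, geom_sum_eq hx1, hxN]
    simp
  have hsumG : ∑ r : ZMod Ng, G r = 0 := by
    rw [← hsumrange]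
    refine Finset.sum_nbij' (fun r => r.val) (fun k => (k : ZMod Ng)) ?_ ?_ ?_ ?_ ?_
    · intro r _; exact Finset.mem_range.mpr (ZMod.val_lt r)
    · intro k _; exact Finset.mem_univ _
    · intro r _; exact ZMod.natCast_rightInverse r
    · intro k hk; exact ZMod.val_natCast_of_lt (Finset.mem_range.mp hk)
    · intro r _; rfl
  -- main identity
  set S : ℂ := ∑ t : Fin T,
      Complex.exp (2 * Real.pi * Complex.I * ((d t : ℂ) * (p : ℂ)) / (Ng : ℂ)) with hS
  have hSg : S = ∑ t : Fin T, g (d t) := by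
    refine Finset.sum_congr rfl fun t _ => ?_
    simp only [hg]
    congr 1
    rw [hc]
    ring
  have hmul : S * (starRingEnd ℂ) S =
      ∑ x ∈ (univ : Finset (Fin T × Fin T)), g (d x.1 - d x.2) := by
    rw [hSg, map_sum, Finset.sum_mul_sum, ← Finset.sum_product']
    refine Finset.sum_congr rfl fun x _ => ?_
    rw [hconjg, ← hgadd, sub_eq_add_neg]
  have huniv : (univ : Finset (Fin T × Fin T)) = (univ : Finset (Fin T)) ×ˢ univ := by
    rfl
  have hsplit : S * (starRingEnd ℂ) S =
      (T : ℂ) + ∑ x ∈ (univ : Finset (Fin T)).offDiag, g (d x.1 - d x.2) := by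
    rw [hmul, huniv, ← Finset.diag_union_offDiag,
      Finset.sum_union (Finset.disjoint_diag_offDiag _)]
    congr 1
    have hdiag : ∀ x ∈ (univ : Finset (Fin T)).diag, g (d x.1 - d x.2) = 1 := by
      intro x hx
      have := (Finset.mem_diag.mp hx).2
      rw [this, sub_self]
      simp [hg]
    rw [Finset.sum_congr rfl hdiag, Finset.sum_const, Finset.diag_card, card_univ,
      Fintype.card_fin, nsmul_eq_mul, mul_one]
  -- the difference image
  have hinj : Set.InjOn (fun x : Fin T × Fin T => ((d x.1 - d x.2 : ℤ) : ZMod Ng))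
      ((univ : Finset (Fin T)).offDiag : Set (Fin T × Fin T)) := by
    intro x hx y hy hxy
    simp only [Finset.coe_offDiag, Set.mem_setOf_eq] at hx hy
    by_contra hne
    refine hSidon x.1 x.2 y.1 y.2 hx.2.2 hy.2.2 ?_ ?_
    · intro h
      exact hne (Prod.ext (congrArg Prod.fst h) (congrArg Prod.snd h))
    · exact (ZMod.intCast_eq_intCast_iff _ _ _).mp hxy
  set D : Finset (ZMod Ng) :=
    (univ : Finset (Fin T)).offDiag.image
      (fun x : Fin T × Fin T => ((d x.1 - d x.2 : ℤ) : ZMod Ng)) with hD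
  have hcardD : D.card = T * T - T := by
    rw [hD, Finset.card_image_of_injOn hinj, Finset.offDiag_card, card_univ, Fintype.card_fin]
  have hED : ∑ x ∈ (univ : Finset (Fin T)).offDiag, g (d x.1 - d x.2) = ∑ r ∈ D, G r := by
    rw [hD, Finset.sum_image (fun x hx y hy h => hinj hx hy h)]
    exact Finset.sum_congr rfl fun x _ => hgG _
  set A : Finset (ZMod Ng) := univ \ {0} with hA
  have hDA : D ⊆ A := by
    intro r hr
    rw [hD, Finset.mem_image] at hr
    obtain ⟨x, hx, hxr⟩ := hr
    rw [hA, Finset.mem_sdiff]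
    refine ⟨Finset.mem_univ _, ?_⟩
    rw [Finset.mem_singleton, ← hxr]
    intro h0
    exact hSidon0 x.1 x.2 (Finset.mem_offDiag.mp hx).2.2
      ((ZMod.intCast_zmod_eq_zero_iff_dvd _ _).mp h0)
  have hG0 : G 0 = 1 := by
    simp only [hG, ZMod.val_zero]
    simp [hg]
  have hsumA : ∑ r ∈ A, G r = -1 := by
    have h0u : ({0} : Finset (ZMod Ng)) ⊆ univ := Finset.subset_univ _
    have := Finset.sum_sdiff (f := G) h0u
    rw [hsumG, Finset.sum_singleton, hG0] at this
    rw [hA]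
    linear_combination this
  have hcardA : A.card = Ng - 1 := by
    rw [hA, Finset.card_sdiff_of_subset (Finset.subset_univ _), Finset.card_singleton, card_univ,
      ZMod.card]
  set M : Finset (ZMod Ng) := A \ D with hM
  have hsumM : ∑ r ∈ M, G r + ∑ r ∈ D, G r = ∑ r ∈ A, G r := Finset.sum_sdiff hDA
  have hcardM : M.card = T - 2 := by
    have hNgTT : Ng = T * T - 1 := by rw [hNg, hTT]
    have h2T : 2 * T ≤ T * T := by nlinarith
    rw [hM, Finset.card_sdiff_of_subset hDA, hcardA, hcardD]
    omega
  have habsM : ‖∑ r ∈ M, G r‖ ≤ (T : ℝ) - 2 := by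
    calc ‖∑ r ∈ M, G r‖ ≤ ∑ r ∈ M, ‖G r‖ := by
          exact norm_sum_le _ _
      _ = ∑ r ∈ M, 1 := Finset.sum_congr rfl fun r _ => habsg _
      _ = (M.card : ℝ) := by rw [Finset.sum_const, nsmul_eq_mul, mul_one]
      _ = (T : ℝ) - 2 := by rw [hcardM]; push_cast [Nat.cast_sub hT]; ring
  have habsD : ‖∑ r ∈ D, G r‖ ≤ (T : ℝ) - 1 := by
    have hDeq : ∑ r ∈ D, G r = -1 - ∑ r ∈ M, G r := by
      rw [← hsumA, ← hsumM]; ring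
    rw [hDeq]
    calc ‖-1 - ∑ r ∈ M, G r‖
        ≤ ‖(-1 : ℂ)‖ + ‖∑ r ∈ M, G r‖ := by
          exact (norm_sub_le _ _)
      _ ≤ 1 + ((T : ℝ) - 2) := by
          have hone : ‖(-1 : ℂ)‖ = 1 := by simp
          linarith [habsM]
      _ = (T : ℝ) - 1 := by ring
  -- finish
  have hkey : ((‖S‖ ^ 2 : ℝ) : ℂ) = S * (starRingEnd ℂ) S := by
    rw [Complex.mul_conj, Complex.sq_norm]
  have hre : (‖S‖ ^ 2 : ℝ) = (T : ℝ) + (∑ r ∈ D, G r).re := by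
    have h1 : ((‖S‖ ^ 2 : ℝ) : ℂ) = (T : ℂ) + ∑ r ∈ D, G r := by
      rw [hkey, hsplit, hED]
    have h2 := congrArg Complex.re h1
    simp only [Complex.ofReal_re, Complex.add_re, Complex.natCast_re] at h2
    exact h2
  have hrebound : (∑ r ∈ D, G r).re ≤ (T : ℝ) - 1 :=
    le_trans (Complex.re_le_norm _) habsD
  rw [hre]
  linarith
end

section
/- Let T ≥ 2, N_g = T² − 1, and let Ω = {d_1,…,d_T} be a set of T integers that is a Sidon set modulo N_g (all pairwise differences of distinct elements nonzero and pairwise distinct modulo N_g). Consider the uniform frequency grid f_n = −1 + 2(n−1)/N_g, n = 1,…,N_g, and the sparse-array steering vectors a_Ω(f) ∈ ℂ^T with entries e^{iπ d_t f}. Then the minimum subspace distance of the antenna-space subspace code {a_Ω(f_n) : n = 1,…,N_g} satisfies 1 − max_{l≠k} |a_Ω(f_l)^H a_Ω(f_k)|²/T² ≥ 1 − (2T−1)/T² ≥ 1 − 2/T. -/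
open Finset in
lemma key (T Ng : ℕ) (hT : 2 ≤ T) (hNg : Ng = T ^ 2 - 1) (d : Fin T → ℤ)
    (hSidon : ∀ i j m n : Fin T, i ≠ j → m ≠ n → (i, j) ≠ (m, n) →
      ¬ (d i - d j ≡ d m - d n [ZMOD (Ng : ℤ)]))
    (ζ : ℂ) (habs : ‖ζ‖ = 1) (hpow : ζ ^ Ng = 1) (hζ1 : ζ ≠ 1) :
    ‖∑ t, ζ ^ (d t)‖ ^ 2 ≤ 2 * T - 1 := by
  have hNg3 : 3 ≤ Ng := by
    have : 4 ≤ T ^ 2 := by nlinarith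
    omega
  have hζ0 : ζ ≠ 0 := by
    intro h; rw [h] at habs; simp at habs
  -- character on ZMod Ng
  set χ : ZMod Ng → ℂ := fun r => ζ ^ (ZMod.val r) with hχdef
  have hχabs : ∀ r, ‖χ r‖ = 1 := by
    intro r; simp [hχdef, map_pow, habs]
  haveI : NeZero Ng := ⟨by omega⟩
  have hχ : ∀ m : ℤ, ζ ^ m = χ ((m : ZMod Ng)) := by
    intro m
    have hmod : ((ZMod.val ((m : ZMod Ng)) : ℤ) : ZMod Ng) = (m : ZMod Ng) := by
      haveI : NeZero Ng := ⟨by omega⟩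
      push_cast
      simp [ZMod.natCast_val, ZMod.cast_id]
    rw [ZMod.intCast_eq_intCast_iff, Int.ModEq] at hmod
    obtain ⟨q, hq⟩ : (Ng : ℤ) ∣ (m - (ZMod.val ((m : ZMod Ng)) : ℤ)) := Int.ModEq.dvd hmod
    have h1 : m = (ZMod.val ((m : ZMod Ng)) : ℤ) + (Ng : ℤ) * q := by linarith
    rw [show ζ ^ m = ζ ^ ((ZMod.val ((m : ZMod Ng)) : ℤ) + (Ng : ℤ) * q) by rw [← h1]]
    rw [zpow_add₀ hζ0, zpow_mul, zpow_natCast ζ Ng, hpow, one_zpow, mul_one,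
      zpow_natCast]
  -- sum of character over all of ZMod Ng is zero
  have hsum0 : ∑ r : ZMod Ng, χ r = 0 := by
    have : ∑ r : ZMod Ng, χ r = ∑ i ∈ Finset.range Ng, ζ ^ i := by
      apply Finset.sum_nbij' (fun r => ZMod.val r) (fun i => (i : ZMod Ng))
      · intro r _; exact Finset.mem_range.mpr (ZMod.val_lt r)
      · intro i _; exact Finset.mem_univ _
      · intro r _; simp [ZMod.natCast_val, ZMod.cast_id]
      · intro i hi; exact ZMod.val_cast_of_lt (Finset.mem_range.mp hi)
      · intro r _; rfl
    rw [this, geom_sum_eq hζ1, hpow, sub_self, zero_div]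
  -- the image of the off-diagonal difference map
  set P : Finset (Fin T × Fin T) := Finset.univ.offDiag with hP
  set φ : Fin T × Fin T → ZMod Ng := fun p => ((d p.1 - d p.2 : ℤ) : ZMod Ng) with hφ
  have hinj : Set.InjOn φ P := by
    intro p hp q hq hpq
    rw [hP, Finset.coe_offDiag, Set.mem_offDiag] at hp hq
    by_contra hne
    refine hSidon p.1 p.2 q.1 q.2 hp.2.2 hq.2.2 ?_ ?_
    · simpa [Prod.ext_iff] using hne
    · exact (ZMod.intCast_eq_intCast_iff _ _ _).mp hpq
  set S' : Finset (ZMod Ng) := P.image φ with hS'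
  have hcardP : P.card = T * T - T := by
    rw [hP, Finset.offDiag_card, Finset.card_univ, Fintype.card_fin]
  have hcardS' : S'.card = T * T - T := by
    rw [hS', Finset.card_image_of_injOn hinj, hcardP]
  have hcardC : (Finset.univ \ S').card = T - 1 := by
    rw [Finset.card_sdiff_of_subset (Finset.subset_univ _), Finset.card_univ, ZMod.card, hcardS', hNg]
    have h2 : T ^ 2 = T * T := sq T
    have h3 : T ≤ T * T := Nat.le_mul_of_pos_left T (by omega)
    omega
  -- bound the sum over S'
  have hSbound : ‖∑ r ∈ S', χ r‖ ≤ (T : ℝ) - 1 := by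
    have hsplit : ∑ r ∈ S', χ r = - ∑ r ∈ Finset.univ \ S', χ r := by
      have := Finset.sum_sdiff_eq_sub (f := χ) (Finset.subset_univ S')
      rw [hsum0] at this
      linear_combination this
    rw [hsplit, norm_neg]
    calc ‖∑ r ∈ Finset.univ \ S', χ r‖
        ≤ ∑ r ∈ Finset.univ \ S', ‖χ r‖ := by
          exact norm_sum_le _ _
      _ = (T : ℝ) - 1 := by
          simp only [hχabs, Finset.sum_const, hcardC, nsmul_eq_mul, mul_one]
          have : (1:ℝ) ≤ T := by exact_mod_cast Nat.one_le_of_lt hT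
          push_cast [Nat.cast_sub (by omega : 1 ≤ T)]
          ring
  -- main computation
  set A : ℂ := ∑ t, ζ ^ (d t) with hA
  have hnormSq : Complex.normSq ζ = 1 := by
    rw [← Complex.sq_norm, habs]; norm_num
  have hcz : (starRingEnd ℂ) ζ = ζ⁻¹ := by
    refine eq_inv_of_mul_eq_one_right ?_
    rw [Complex.mul_conj, hnormSq, Complex.ofReal_one]
  have hconj : (starRingEnd ℂ) A = ∑ s, ζ ^ (-(d s)) := by
    rw [hA, map_sum]
    refine Finset.sum_congr rfl fun t _ => ?_
    rw [map_zpow₀, hcz, inv_zpow, ← zpow_neg]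
  -- expand |A|^2
  have hexpand : ((‖A‖ ^ 2 : ℝ) : ℂ) = (T : ℂ) + ∑ r ∈ S', χ r := by
    rw [Complex.sq_norm, ← Complex.mul_conj, hconj, hA, Finset.sum_mul_sum]
    have hterm : ∀ t s : Fin T, ζ ^ (d t) * ζ ^ (-(d s)) = ζ ^ (d t - d s) := by
      intro t s
      rw [← zpow_add₀ hζ0]; ring_nf
    have h1 : ∑ t, ∑ s, ζ ^ (d t) * ζ ^ (-(d s)) =
        ∑ p ∈ Finset.univ ×ˢ Finset.univ, ζ ^ (d p.1 - d p.2) := by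
      rw [Finset.sum_product]
      exact Finset.sum_congr rfl fun t _ => Finset.sum_congr rfl fun s _ => hterm t s
    rw [h1, ← Finset.diag_union_offDiag, Finset.sum_union (Finset.disjoint_diag_offDiag _)]
    congr 1
    · have : ∀ p ∈ Finset.univ.diag (α := Fin T), ζ ^ (d p.1 - d p.2) = 1 := by
        intro p hp
        rw [Finset.mem_diag] at hp
        rw [hp.2, sub_self, zpow_zero]
      rw [Finset.sum_congr rfl this, Finset.sum_const, Finset.diag_card, Finset.card_univ,
        Fintype.card_fin, nsmul_eq_mul, mul_one]
    · rw [hS', Finset.sum_image (fun x hx y hy h => hinj hx hy h)]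
      exact Finset.sum_congr rfl fun p _ => hχ _
  -- conclude
  have hre : ‖A‖ ^ 2 = (T : ℝ) + (∑ r ∈ S', χ r).re := by
    have h := congrArg Complex.re hexpand
    rwa [Complex.ofReal_re, Complex.add_re, Complex.natCast_re] at h
  have hle : (∑ r ∈ S', χ r).re ≤ (T : ℝ) - 1 :=
    le_trans (Complex.re_le_norm _) hSbound
  rw [hre]
  linarith

/-- For a Sidon set `Ω` modulo `N_g = T² − 1`, the antenna-space
subspace code `{a_Ω(f_n)}` on the uniform grid has minimum subspace distance at
least `1 − (2T−1)/T² ≥ 1 − 2/T`. -/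
theorem stmt_12 (T : ℕ) (hT : 2 ≤ T) (Ng : ℕ) (hNg : Ng = T ^ 2 - 1)
    (d : Fin T → ℤ)
    (hSidon0 : ∀ i j : Fin T, i ≠ j → ¬ ((Ng : ℤ) ∣ (d i - d j)))
    (hSidon : ∀ i j m n : Fin T, i ≠ j → m ≠ n → (i, j) ≠ (m, n) →
      ¬ (d i - d j ≡ d m - d n [ZMOD (Ng : ℤ)]))
    (f : Fin Ng → ℝ) (hf : ∀ n, f n = -1 + 2 * (n : ℝ) / Ng)
    (aΩ : ℝ → Fin T → ℂ)
    (haΩ : ∀ g (t : Fin T), aΩ g t = Complex.exp (Complex.I * Real.pi * (d t : ℝ) * g)) :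
    (∀ l k : Fin Ng, l ≠ k →
      1 - ‖∑ t, (starRingEnd ℂ) (aΩ (f l) t) * aΩ (f k) t‖ ^ 2 / (T : ℝ) ^ 2 ≥
        1 - (2 * (T : ℝ) - 1) / (T : ℝ) ^ 2) ∧
    1 - (2 * (T : ℝ) - 1) / (T : ℝ) ^ 2 ≥ 1 - 2 / (T : ℝ) := by
  have hT' : (2:ℝ) ≤ (T:ℝ) := by exact_mod_cast hT
  have hNg3 : 3 ≤ Ng := by
    have : 4 ≤ T ^ 2 := by nlinarith
    omega
  have hNgR : (Ng : ℝ) ≠ 0 := Nat.cast_ne_zero.mpr (by omega)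
  constructor
  · intro l k hlk
    set c : ℤ := (k : ℤ) - (l : ℤ) with hc
    have hc0 : c ≠ 0 := by
      simp only [hc, sub_ne_zero]
      intro h
      exact hlk ((Fin.ext (by exact_mod_cast h)).symm)
    have hcabs : |c| < (Ng : ℤ) := by
      have hk := k.isLt; have hl := l.isLt
      rw [hc, abs_lt]; omega
    set θ : ℝ := 2 * Real.pi * c / Ng with hθ
    set ζ : ℂ := Complex.exp (θ * Complex.I) with hζ
    have habs : ‖ζ‖ = 1 := Complex.norm_exp_ofReal_mul_I θ
    have hNgC : (Ng : ℂ) ≠ 0 := by exact_mod_cast hNgR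
    have hpow : ζ ^ Ng = 1 := by
      rw [hζ, ← Complex.exp_nat_mul]
      rw [show (Ng : ℂ) * (↑θ * Complex.I) = (c : ℂ) * (2 * Real.pi * Complex.I) by
        rw [hθ]; push_cast
        rw [mul_comm]
        field_simp [hNgC]]
      exact Complex.exp_int_mul_two_pi_mul_I c
    have hζ1 : ζ ≠ 1 := by
      rw [hζ, Ne, Complex.exp_eq_one_iff]
      rintro ⟨n, hn⟩
      have hI : (θ : ℂ) = (n : ℂ) * (2 * Real.pi) := by
        apply mul_right_cancel₀ Complex.I_ne_zero
        rw [hn]; ring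
      have hR : θ = (n : ℝ) * (2 * Real.pi) := by exact_mod_cast hI
      rw [hθ] at hR
      have hπ : Real.pi ≠ 0 := Real.pi_ne_zero
      have hcn : (c : ℝ) = (n : ℝ) * (Ng : ℝ) := by
        have h2π : (2 * Real.pi) ≠ 0 := by positivity
        field_simp at hR
        apply mul_left_cancel₀ h2π
        rw [hR]; ring
      have hcn' : c = n * Ng := by exact_mod_cast hcn
      exact hc0 (Int.eq_zero_of_abs_lt_dvd ⟨n, by rw [hcn']; ring⟩ hcabs)
    have key_eq : ∀ t, (starRingEnd ℂ) (aΩ (f l) t) * aΩ (f k) t = ζ ^ (d t) := by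
      intro t
      rw [haΩ, haΩ, ← Complex.exp_conj, ← Complex.exp_add, hζ, ← Complex.exp_int_mul]
      congr 1
      rw [hf, hf]
      simp only [map_mul, Complex.conj_I, Complex.conj_ofReal]
      rw [hθ, hc]
      push_cast
      field_simp
      ring
    rw [Finset.sum_congr rfl fun t _ => key_eq t]
    have hb := key T Ng hT hNg d hSidon ζ habs hpow hζ1
    have hT2 : (0:ℝ) < (T:ℝ) ^ 2 := by positivity
    rw [ge_iff_le, sub_le_sub_iff_left]
    exact div_le_div_of_nonneg_right hb hT2.le -- maybe wrong name
  · rw [ge_iff_le, sub_le_sub_iff_left, div_le_div_iff₀ (by positivity) (by positivity)]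
    nlinarith
end

section
/- Let T ≥ 2, N_g = T² − 1, and consider the uniform frequency grid f_n = −1 + 2(n−1)/N_g, n = 1,…,N_g. Let Ŝ = (k_1,…,k_T) be a set of T integer shifts that is a Sidon set modulo N_g (all pairwise differences of distinct elements nonzero and pairwise distinct modulo N_g), let w ∈ ℂ^P be a filter with k_t + P ≤ N_a for all t, and suppose B(f_n;w) ≠ 0 for every grid point f_n. Then the minimum subspace distance of the convolutional beamspace subspace code {W_CB(w,Ŝ) a_U(f_n) : n = 1,…,N_g} satisfies d^(s)_min ≥ 1 − (2T−1)/T² ≥ 1 − 2/T. -/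
/-- Subspace distance between two vectors of `ℂ^M`:
`d⁽ˢ⁾(u,v) = 1 − |uᴴv|²/(‖u‖²‖v‖²)`. -/
noncomputable def subDist {M : ℕ} (u v : Fin M → ℂ) : ℝ :=
  1 - ‖∑ i, (starRingEnd ℂ) (u i) * v i‖ ^ 2 /
      ((∑ i, ‖u i‖ ^ 2) * (∑ i, ‖v i‖ ^ 2))

/-- The convolutional beamspace matrix: the `t`-th row is the conjugate of the
filter `w ∈ ℂ^P` placed in positions `k t, …, k t + P − 1` and zero elsewhere. -/
noncomputable def convBeam (Na P T : ℕ) (w : Fin P → ℂ) (k : Fin T → ℕ) :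
    Matrix (Fin T) (Fin Na) ℂ :=
  fun t m => ∑ n : Fin P, if (m : ℕ) = k t + (n : ℕ) then (starRingEnd ℂ) (w n) else 0

/-- The spatial frequency response `B(f;w) = Σ_{n} conj(w_n) e^{iπ n f}` of the filter. -/
noncomputable def freqResp (P : ℕ) (w : Fin P → ℂ) (f : ℝ) : ℂ :=
  ∑ n : Fin P, (starRingEnd ℂ) (w n) * Complex.exp (Complex.I * Real.pi * (n : ℝ) * f)

lemma mulVec_convBeam {Na P T : ℕ} (w : Fin P → ℂ) (k : Fin T → ℕ)
    (hk : ∀ t, k t + P ≤ Na) (g : ℝ) (v : Fin Na → ℂ)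
    (hv : ∀ (m : Fin Na), v m = Complex.exp (Complex.I * Real.pi * (m:ℝ) * g))
    (t : Fin T) :
    (convBeam Na P T w k).mulVec v t
      = Complex.exp (Complex.I * Real.pi * (k t : ℝ) * g) * freqResp P w g := by
  unfold convBeam Matrix.mulVec dotProduct freqResp
  simp only [Finset.sum_mul, Finset.mul_sum]
  rw [Finset.sum_comm]
  refine Finset.sum_congr rfl fun n _ => ?_
  have hlt : k t + (n:ℕ) < Na := by have h1 := n.isLt; have h2 := hk t; omega
  rw [Finset.sum_eq_single (⟨k t + n, hlt⟩ : Fin Na)]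
  · simp only [hv, if_pos rfl]
    push_cast
    rw [show Complex.I * Real.pi * ((k t : ℂ) + (n : ℂ)) * g =
      Complex.I * Real.pi * (k t : ℝ) * g + Complex.I * Real.pi * (n : ℝ) * g by push_cast; ring,
      Complex.exp_add]
    push_cast
    ring
  · intro m _ hm
    rw [if_neg, zero_mul]
    intro h; apply hm; exact Fin.ext h
  · intro h; exact absurd (Finset.mem_univ _) h

lemma sidon_sum_bound (T Ng : ℕ) (hT : 2 ≤ T) (hNg : Ng = T ^ 2 - 1) (k : Fin T → ℕ)
    (hSidon0 : ∀ i j : Fin T, i ≠ j → ¬ ((Ng : ℤ) ∣ ((k i : ℤ) - (k j : ℤ))))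
    (hSidon : ∀ i j m n : Fin T, i ≠ j → m ≠ n → (i, j) ≠ (m, n) →
      ¬ ((k i : ℤ) - (k j : ℤ) ≡ (k m : ℤ) - (k n : ℤ) [ZMOD (Ng : ℤ)]))
    (ζ : ℂ) (hζN : ζ ^ Ng = 1) (hζ1 : ζ ≠ 1) :
    ‖∑ t : Fin T, ζ ^ (k t)‖ ^ 2 ≤ 2 * T - 1 := by
  have hT2 : 4 ≤ T ^ 2 := by nlinarith
  have hNgpos : 0 < Ng := by omega
  haveI : NeZero Ng := ⟨hNgpos.ne'⟩
  have hζ0 : ζ ≠ 0 := by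
    intro h; rw [h, zero_pow hNgpos.ne'] at hζN; exact zero_ne_one hζN
  have hζNz : ζ ^ (Ng : ℤ) = 1 := by rw [zpow_natCast]; exact hζN
  -- periodicity of zpow
  have hper : ∀ a b : ℤ, a ≡ b [ZMOD Ng] → ζ ^ a = ζ ^ b := by
    intro a b hab
    obtain ⟨q, hq⟩ := (Int.ModEq.dvd hab)
    have : a = b + Ng * (-q) := by linarith [hq]
    rw [this, zpow_add₀ hζ0, zpow_mul, hζNz, one_zpow, mul_one]
  -- χ on ZMod
  set χ : ZMod Ng → ℂ := fun a => ζ ^ ((a.val : ℤ)) with hχ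
  have hχcast : ∀ m : ℤ, χ ((m : ZMod Ng)) = ζ ^ m := by
    intro m
    apply hper
    have := ZMod.val_intCast (n := Ng) m
    show (((m : ZMod Ng).val : ℤ)) % (Ng:ℤ) = m % Ng
    rw [this, Int.emod_emod_of_dvd _ dvd_rfl]
  -- |ζ| = 1 and conj
  have habs : ‖ζ‖ = 1 := by
    have h1 : ‖ζ‖ ^ Ng = 1 := by rw [← norm_pow, hζN, norm_one]
    rcases lt_trichotomy (‖ζ‖) 1 with h | h | h
    · exact absurd h1 (by have := pow_lt_one₀ (norm_nonneg ζ) h hNgpos.ne'; linarith)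
    · exact h
    · exact absurd h1 (by have := one_lt_pow₀ h hNgpos.ne'; linarith)
  have hconjz : ∀ m : ℤ, (starRingEnd ℂ) (ζ ^ m) = ζ ^ (-m) := by
    intro m
    have hc : (starRingEnd ℂ) ζ = ζ⁻¹ := by
      have h2 : ζ * (starRingEnd ℂ) ζ = 1 := by
        rw [Complex.mul_conj]
        norm_cast
        rw [Complex.normSq_eq_norm_sq, habs]; norm_num
      field_simp at h2 ⊢
      linear_combination h2
    rw [map_zpow₀, hc, inv_zpow, ← zpow_neg]
  set S : ℂ := ∑ t : Fin T, ζ ^ ((k t : ℤ)) with hS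
  have hSnat : ∑ t : Fin T, ζ ^ (k t) = S := by
    rw [hS]; exact Finset.sum_congr rfl fun t _ => (zpow_natCast ζ (k t)).symm
  set φ : Fin T × Fin T → ZMod Ng := fun p => (Int.cast (((k p.1 : ℤ) - (k p.2 : ℤ))) : ZMod Ng) with hφ
  -- the expansion of |S|^2
  have hexpand : ((‖S‖ ^ 2 : ℝ) : ℂ) = ∑ p ∈ Finset.univ ×ˢ Finset.univ, χ (φ p) := by
    have h1 : ((‖S‖ ^ 2 : ℝ) : ℂ) = S * (starRingEnd ℂ) S := by
      rw [Complex.sq_norm, Complex.mul_conj]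
    rw [h1, hS, map_sum, Finset.sum_mul_sum]
    rw [Finset.sum_product]
    refine Finset.sum_congr rfl fun t _ => Finset.sum_congr rfl fun s _ => ?_
    rw [hconjz, ← zpow_add₀ hζ0, ← sub_eq_add_neg, hχcast]
  -- diag sum
  have hdiag : ∑ p ∈ (Finset.univ : Finset (Fin T)).diag, χ (φ p) = (T : ℂ) := by
    rw [Finset.sum_congr rfl (fun p hp => ?_), Finset.sum_const, Finset.diag_card,
      Finset.card_univ, Fintype.card_fin, nsmul_eq_mul, mul_one]
    have hpe : p.1 = p.2 := (Finset.mem_diag.mp hp).2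
    show χ (φ p) = 1
    rw [hφ]
    simp only [hpe, sub_self]
    rw [Int.cast_zero, hχ]
    simp
  -- injectivity on offDiag
  have hinj : ∀ p ∈ (Finset.univ : Finset (Fin T)).offDiag, ∀ q ∈ (Finset.univ : Finset (Fin T)).offDiag,
      φ p = φ q → p = q := by
    intro p hp q hq hpq
    obtain ⟨-, -, hp3⟩ := Finset.mem_offDiag.mp hp
    obtain ⟨-, -, hq3⟩ := Finset.mem_offDiag.mp hq
    by_contra hne
    exact hSidon p.1 p.2 q.1 q.2 hp3 hq3 (by simpa using hne)
      ((ZMod.intCast_eq_intCast_iff _ _ _).mp hpq)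
  set D : Finset (ZMod Ng) := (Finset.univ : Finset (Fin T)).offDiag.image φ with hD
  have hoff : ∑ p ∈ (Finset.univ : Finset (Fin T)).offDiag, χ (φ p) = ∑ a ∈ D, χ a := by
    rw [hD, Finset.sum_image hinj]
  have hcardD : D.card = T * T - T := by
    rw [hD, Finset.card_image_of_injOn hinj, Finset.offDiag_card, Finset.card_univ,
      Fintype.card_fin]
  -- total sum over ZMod is zero
  have hsum0 : ∑ a : ZMod Ng, χ a = 0 := by
    have h1 : ∑ a : ZMod Ng, χ a = ∑ i ∈ Finset.range Ng, ζ ^ i := by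
      refine Finset.sum_nbij' (fun a => a.val) (fun i => (i : ZMod Ng)) ?_ ?_ ?_ ?_ ?_
      · intro a _; exact Finset.mem_range.mpr (ZMod.val_lt a)
      · intro i _; exact Finset.mem_univ _
      · intro a _; exact ZMod.natCast_rightInverse a
      · intro i hi; exact ZMod.val_cast_of_lt (Finset.mem_range.mp hi)
      · intro a _; rw [hχ]; exact zpow_natCast ζ a.val
    rw [h1, geom_sum_eq hζ1, hζN, sub_self, zero_div]
  have hDsub : D ⊆ Finset.univ := Finset.subset_univ D
  have hsplit : ∑ a ∈ Finset.univ \ D, χ a + ∑ a ∈ D, χ a = 0 := by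
    rw [Finset.sum_sdiff hDsub]; exact hsum0
  -- bound complement sum
  have hcardC : (Finset.univ \ D).card = T - 1 := by
    rw [Finset.card_sdiff_of_subset hDsub, Finset.card_univ, ZMod.card, hcardD, hNg]
    have h2 : T ^ 2 = T * T := pow_two T
    have h3 : T ≤ T * T := Nat.le_mul_of_pos_left T (by omega)
    omega
  have hbound : ‖∑ a ∈ Finset.univ \ D, χ a‖ ≤ (T : ℝ) - 1 := by
    calc ‖∑ a ∈ Finset.univ \ D, χ a‖
        ≤ ∑ a ∈ Finset.univ \ D, ‖χ a‖ := norm_sum_le _ _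
      _ = ∑ a ∈ Finset.univ \ D, 1 := by
          refine Finset.sum_congr rfl fun a _ => ?_
          show ‖ζ ^ ((a.val : ℕ) : ℤ)‖ = 1
          rw [zpow_natCast, norm_pow, habs, one_pow]
      _ = ((T - 1 : ℕ) : ℝ) := by rw [Finset.sum_const, hcardC]; simp
      _ = (T : ℝ) - 1 := by rw [Nat.cast_sub (by omega)]; norm_num
  -- put it together
  have hkey : ((‖S‖ ^ 2 : ℝ) : ℂ) = (T : ℂ) - ∑ a ∈ Finset.univ \ D, χ a := by
    rw [hexpand, ← Finset.diag_union_offDiag,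
      Finset.sum_union (Finset.disjoint_diag_offDiag _), hdiag, hoff]
    have : ∑ a ∈ D, χ a = - ∑ a ∈ Finset.univ \ D, χ a := by linear_combination hsplit
    rw [this]; ring
  have habs2 : ‖S‖ ^ 2 = ‖((‖S‖ ^ 2 : ℝ) : ℂ)‖ := by
    rw [Complex.norm_real, Real.norm_eq_abs, abs_of_nonneg (by positivity)]
  rw [hSnat, habs2, hkey]
  calc ‖(T : ℂ) - ∑ a ∈ Finset.univ \ D, χ a‖
      ≤ ‖(T : ℂ)‖ + ‖∑ a ∈ Finset.univ \ D, χ a‖ :=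
        norm_sub_le _ _
    _ ≤ (T : ℝ) + ((T : ℝ) - 1) := by
        refine add_le_add ?_ hbound
        rw [Complex.norm_natCast]
    _ = 2 * T - 1 := by ring

/-- For Sidon (Golomb) shifts modulo `N_g = T² − 1` and a filter whose
response does not vanish on the uniform grid, the convolutional beamspace subspace
code has minimum subspace distance at least `1 − (2T−1)/T² ≥ 1 − 2/T`. -/
theorem stmt_16 (T : ℕ) (hT : 2 ≤ T) (Ng : ℕ) (hNg : Ng = T ^ 2 - 1)
    (Na P : ℕ) (w : Fin P → ℂ) (k : Fin T → ℕ) (hk : ∀ t, k t + P ≤ Na)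
    (hSidon0 : ∀ i j : Fin T, i ≠ j → ¬ ((Ng : ℤ) ∣ ((k i : ℤ) - (k j : ℤ))))
    (hSidon : ∀ i j m n : Fin T, i ≠ j → m ≠ n → (i, j) ≠ (m, n) →
      ¬ ((k i : ℤ) - (k j : ℤ) ≡ (k m : ℤ) - (k n : ℤ) [ZMOD (Ng : ℤ)]))
    (f : Fin Ng → ℝ) (hf : ∀ n, f n = -1 + 2 * (n : ℝ) / Ng)
    (aU : ℝ → Fin Na → ℂ)
    (haU : ∀ g (m : Fin Na), aU g m = Complex.exp (Complex.I * Real.pi * (m : ℝ) * g))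
    (hB : ∀ n : Fin Ng, freqResp P w (f n) ≠ 0) :
    (∀ l j : Fin Ng, l ≠ j →
      subDist ((convBeam Na P T w k).mulVec (aU (f l)))
          ((convBeam Na P T w k).mulVec (aU (f j))) ≥
        1 - (2 * (T : ℝ) - 1) / (T : ℝ) ^ 2) ∧
    1 - (2 * (T : ℝ) - 1) / (T : ℝ) ^ 2 ≥ 1 - 2 / (T : ℝ) := by
  have hTR : (2 : ℝ) ≤ (T : ℝ) := by exact_mod_cast hT
  have hTpos : (0 : ℝ) < T := by linarith
  have hT2 : 4 ≤ T ^ 2 := by nlinarith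
  have hNgpos : 0 < Ng := by omega
  have hNgR : (0 : ℝ) < (Ng : ℝ) := by exact_mod_cast hNgpos
  constructor
  · intro l j hlj
    set g1 := f l with hg1
    set g2 := f j with hg2
    set c1 := freqResp P w g1 with hc1def
    set c2 := freqResp P w g2 with hc2def
    have hc1 : c1 ≠ 0 := hB l
    have hc2 : c2 ≠ 0 := hB j
    have hu := mulVec_convBeam w k hk g1 (aU g1) (haU g1)
    have hv := mulVec_convBeam w k hk g2 (aU g2) (haU g2)
    -- the root of unity
    set p : ℤ := (j : ℤ) - (l : ℤ) with hp
    have hp0 : p ≠ 0 := by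
      intro h
      apply hlj
      apply Fin.ext
      omega
    have hpabs : p.natAbs < Ng := by
      have hj := j.isLt
      have hl := l.isLt
      omega
    have hNgC : (Ng : ℂ) ≠ 0 := by exact_mod_cast hNgpos.ne'
    have hpiC : (Real.pi : ℂ) ≠ 0 := by exact_mod_cast Real.pi_ne_zero
    set ζ : ℂ := Complex.exp (2 * Real.pi * Complex.I * p / Ng) with hζ
    have hζN : ζ ^ Ng = 1 := by
      rw [hζ, ← Complex.exp_nat_mul]
      have h1 : (Ng : ℂ) * (2 * Real.pi * Complex.I * p / Ng) = p * (2 * Real.pi * Complex.I) := by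
        field_simp
      rw [h1, Complex.exp_int_mul_two_pi_mul_I]
    have hζ1 : ζ ≠ 1 := by
      rw [hζ]
      intro hone
      rw [Complex.exp_eq_one_iff] at hone
      obtain ⟨n, hn⟩ := hone
      have hEq : (p : ℂ) = (n : ℂ) * (Ng : ℂ) := by
        field_simp at hn
        have h2 : (2 : ℂ) * Real.pi * Complex.I ≠ 0 := by
          simp [Complex.I_ne_zero, hpiC]
        have h5 : (2 * (Real.pi : ℂ) * Complex.I) * ((p : ℂ) - (n : ℂ) * (Ng : ℂ)) = 0 := by
          linear_combination (2 * (Real.pi : ℂ) * Complex.I) * hn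
        have h6 := (mul_eq_zero.mp h5).resolve_left h2
        linear_combination h6
      have hEqZ : p = n * (Ng : ℤ) := by exact_mod_cast hEq
      rcases eq_or_ne n 0 with hn0 | hn0
      · rw [hn0, zero_mul] at hEqZ; exact hp0 hEqZ
      · have h3 : p.natAbs = n.natAbs * Ng := by
          rw [hEqZ, Int.natAbs_mul, Int.natAbs_natCast]
        have h4 : 1 ≤ n.natAbs := Nat.one_le_iff_ne_zero.mpr (Int.natAbs_ne_zero.mpr hn0)
        nlinarith [hpabs, h3, h4]
    -- modulus of the exponentials
    have habse : ∀ a g : ℝ, ‖Complex.exp (Complex.I * Real.pi * (a : ℂ) * (g : ℂ))‖ = 1 := by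
      intro a g
      rw [Complex.norm_exp]
      have h0 : (Complex.I * (Real.pi : ℂ) * (a : ℂ) * (g : ℂ)).re = 0 := by simp
      rw [h0, Real.exp_zero]
    -- conjugate-product of exponentials is a power of ζ
    have hterm : ∀ t : Fin T,
        (starRingEnd ℂ) (Complex.exp (Complex.I * Real.pi * ((k t : ℕ) : ℝ) * g1)) *
          Complex.exp (Complex.I * Real.pi * ((k t : ℕ) : ℝ) * g2) = ζ ^ (k t) := by
      intro t
      rw [← Complex.exp_conj]
      have hc : (starRingEnd ℂ) ((Complex.I : ℂ) * Real.pi * ((k t : ℕ) : ℝ) * g1)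
          = -((Complex.I : ℂ) * Real.pi * ((k t : ℕ) : ℝ) * g1) := by
        simp [map_mul, Complex.conj_I, Complex.conj_ofReal]
      rw [hc, ← Complex.exp_add, hζ, ← Complex.exp_nat_mul]
      congr 1
      rw [hg1, hg2, hf l, hf j, hp]
      push_cast
      field_simp
      ring
    -- norms
    have hnorm1 : ∑ t, ‖(convBeam Na P T w k).mulVec (aU g1) t‖ ^ 2
        = (T : ℝ) * ‖c1‖ ^ 2 := by
      rw [Finset.sum_congr rfl fun t _ => by
        rw [hu t, norm_mul, habse ((k t : ℕ) : ℝ) g1, one_mul]]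
      rw [Finset.sum_const, Finset.card_univ, Fintype.card_fin, nsmul_eq_mul]
    have hnorm2 : ∑ t, ‖(convBeam Na P T w k).mulVec (aU g2) t‖ ^ 2
        = (T : ℝ) * ‖c2‖ ^ 2 := by
      rw [Finset.sum_congr rfl fun t _ => by
        rw [hv t, norm_mul, habse ((k t : ℕ) : ℝ) g2, one_mul]]
      rw [Finset.sum_const, Finset.card_univ, Fintype.card_fin, nsmul_eq_mul]
    -- inner product
    have hip : (∑ t, (starRingEnd ℂ) ((convBeam Na P T w k).mulVec (aU g1) t) *
          (convBeam Na P T w k).mulVec (aU g2) t)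
        = (starRingEnd ℂ) c1 * c2 * ∑ t : Fin T, ζ ^ (k t) := by
      rw [Finset.mul_sum]
      refine Finset.sum_congr rfl fun t _ => ?_
      rw [hu t, hv t, map_mul]
      calc (starRingEnd ℂ) (Complex.exp (Complex.I * Real.pi * ((k t : ℕ) : ℝ) * g1)) *
            (starRingEnd ℂ) c1 * (Complex.exp (Complex.I * Real.pi * ((k t : ℕ) : ℝ) * g2) * c2)
          = (starRingEnd ℂ) c1 * c2 *
            ((starRingEnd ℂ) (Complex.exp (Complex.I * Real.pi * ((k t : ℕ) : ℝ) * g1)) *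
              Complex.exp (Complex.I * Real.pi * ((k t : ℕ) : ℝ) * g2)) := by ring
        _ = (starRingEnd ℂ) c1 * c2 * ζ ^ (k t) := by rw [hterm t]
    -- the bound on |S|^2
    have hSle : ‖∑ t : Fin T, ζ ^ (k t)‖ ^ 2 ≤ 2 * (T : ℝ) - 1 :=
      sidon_sum_bound T Ng hT hNg k hSidon0 hSidon ζ hζN hζ1
    -- assemble
    have hA1 : (0 : ℝ) < ‖c1‖ ^ 2 := pow_pos (norm_pos_iff.mpr hc1) 2
    have hA2 : (0 : ℝ) < ‖c2‖ ^ 2 := pow_pos (norm_pos_iff.mpr hc2) 2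
    unfold subDist
    rw [hip, hnorm1, hnorm2, norm_mul, norm_mul, Complex.norm_conj, mul_pow, mul_pow]
    have hkey : ‖c1‖ ^ 2 * ‖c2‖ ^ 2 *
          ‖∑ t : Fin T, ζ ^ (k t)‖ ^ 2 /
          ((T : ℝ) * ‖c1‖ ^ 2 * ((T : ℝ) * ‖c2‖ ^ 2))
        = ‖∑ t : Fin T, ζ ^ (k t)‖ ^ 2 / (T : ℝ) ^ 2 := by
      field_simp
    rw [hkey]
    have hfin : ‖∑ t : Fin T, ζ ^ (k t)‖ ^ 2 / (T : ℝ) ^ 2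
        ≤ (2 * (T : ℝ) - 1) / (T : ℝ) ^ 2 := by gcongr
    linarith
  · rw [ge_iff_le, sub_le_sub_iff_left, div_le_div_iff₀ (by positivity) (by positivity)]
    nlinarith
end

section
/- Let T ≥ 3 and N_g = T² − 1, with the uniform frequency grid f_n = −1 + 2(n−1)/N_g, n = 1,…,N_g. Let Ŝ_ULA = {0,1,…,T−1} and a_{Ŝ_ULA}(f) = (e^{iπ t f})_{t=0}^{T−1} ∈ ℂ^T. Then the minimum subspace distance of the code {a_{Ŝ_ULA}(f_n) : n = 1,…,N_g} satisfies 1 − max_{l≠k} |a_{Ŝ_ULA}(f_l)^H a_{Ŝ_ULA}(f_k)|²/T² ≤ 1 − 4/π². Consequently, for any filter w with B(f_n;w) ≠ 0 on the grid, the convolutional beamspace subspace code with uniform (ULA) shifts also has minimum subspace distance at most 1 − 4/π². -/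
open Finset


lemma abs_exp_I_mul (x : ℝ) : ‖Complex.exp (Complex.I * x)‖ = 1 := by
  rw [Complex.norm_exp]; simp

lemma two_div_pi_le_cos {x : ℝ} (hx : |x| ≤ Real.pi / 4) : 2 / Real.pi ≤ Real.cos x := by
  have h2 : Real.cos x = Real.cos |x| := (Real.cos_abs x).symm
  have h3 : Real.cos (Real.pi/4) ≤ Real.cos |x| :=
    Real.cos_le_cos_of_nonneg_of_le_pi (abs_nonneg x) (by linarith [Real.pi_pos]) hx
  have h4 : 2 / Real.pi ≤ Real.cos (Real.pi/4) := by
    rw [Real.cos_pi_div_four]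
    have hs : Real.sqrt 2 ^ 2 = 2 := Real.sq_sqrt (by norm_num)
    have hs0 : 0 ≤ Real.sqrt 2 := Real.sqrt_nonneg 2
    have hp : (3.14:ℝ) ≤ Real.pi := by linarith [Real.pi_gt_d6]
    have h14 : (1.4:ℝ) ≤ Real.sqrt 2 := by nlinarith
    rw [div_le_div_iff₀ Real.pi_pos (by norm_num)]
    nlinarith
  linarith

lemma key_lb (T Ng : ℕ) (hT : 3 ≤ T) (hNg : Ng = T ^ 2 - 1) :
    2 * T / Real.pi ≤
      ‖∑ t : Fin T, Complex.exp (Complex.I * Real.pi * (t : ℝ) * (2 / (Ng:ℝ)))‖ := by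
  have hT2 : 9 ≤ T ^ 2 := by nlinarith
  have hNgpos : 0 < Ng := by omega
  have h3 : (3:ℝ) ≤ (T:ℝ) := by exact_mod_cast hT
  have hNgR : (Ng:ℝ) = (T:ℝ)^2 - 1 := by
    subst hNg; push_cast [Nat.cast_sub (by omega : 1 ≤ T ^ 2)]; ring
  have hNgR8 : (8:ℝ) ≤ (Ng:ℝ) := by nlinarith
  set θ : ℝ := 2 / (Ng:ℝ) with hθ
  have hθ0 : 0 ≤ θ := by positivity
  set α : ℝ := Real.pi * ((T:ℝ) - 1) / (Ng:ℝ) with hα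
  have hα0 : 0 ≤ α := by
    rw [hα]
    have := Real.pi_pos
    apply div_nonneg (by nlinarith) (by positivity)
  have hα4 : α ≤ Real.pi / 4 := by
    rw [hα, div_le_div_iff₀ (by positivity) (by norm_num)]
    have hkey : 4*((T:ℝ)-1) ≤ (Ng:ℝ) := by nlinarith
    nlinarith [mul_le_mul_of_nonneg_left hkey Real.pi_pos.le]
  set S : ℂ := ∑ t : Fin T, Complex.exp (Complex.I * Real.pi * (t : ℝ) * θ) with hS
  set c : ℂ := Complex.exp (-(Complex.I * (α:ℝ))) with hc
  have hcS : c * S = ∑ t : Fin T, Complex.exp ((↑(Real.pi * θ * (t:ℝ) - α) : ℂ) * Complex.I) := by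
    rw [hS, Finset.mul_sum]
    refine Finset.sum_congr rfl fun t _ => ?_
    rw [hc, ← Complex.exp_add]
    congr 1
    push_cast
    ring
  have hre : (c * S).re = ∑ t : Fin T, Real.cos (Real.pi * θ * (t:ℝ) - α) := by
    rw [hcS, Complex.re_sum]
    exact Finset.sum_congr rfl fun t _ => Complex.exp_ofReal_mul_I_re _
  have hbound : ∀ t : Fin T, 2 / Real.pi ≤ Real.cos (Real.pi * θ * (t:ℝ) - α) := by
    intro t
    apply two_div_pi_le_cos
    have htle : (t:ℝ) ≤ (T:ℝ) - 1 := by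
      have h1 : ((t:ℕ):ℝ) < (T:ℝ) := by exact_mod_cast t.isLt
      have h2 : (t:ℕ) + 1 ≤ T := t.isLt
      have : ((t:ℕ):ℝ) + 1 ≤ (T:ℝ) := by exact_mod_cast h2
      linarith
    have ht0 : (0:ℝ) ≤ (t:ℝ) := Nat.cast_nonneg _
    have e1 : Real.pi * θ * (t:ℝ) = 2*Real.pi*(t:ℝ)/(Ng:ℝ) := by rw [hθ]; ring
    have e2 : 2*α = 2*Real.pi*((T:ℝ)-1)/(Ng:ℝ) := by rw [hα]; ring
    have hub : Real.pi * θ * (t:ℝ) ≤ 2*α := by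
      rw [e1, e2]
      have h2pi : (0:ℝ) ≤ 2*Real.pi := by linarith [Real.pi_pos]
      gcongr
    have hlb : 0 ≤ Real.pi * θ * (t:ℝ) :=
      mul_nonneg (mul_nonneg Real.pi_pos.le hθ0) ht0
    rw [abs_le]
    constructor <;> linarith
  have hcabs : ‖c‖ = 1 := by
    rw [hc]
    have : -(Complex.I * (α:ℝ)) = Complex.I * ((-α : ℝ):ℂ) := by push_cast; ring
    rw [this, abs_exp_I_mul]
  calc 2 * (T:ℝ) / Real.pi = ∑ _t : Fin T, 2 / Real.pi := by
        rw [Finset.sum_const, Finset.card_univ, Fintype.card_fin, nsmul_eq_mul]; ring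
    _ ≤ ∑ t : Fin T, Real.cos (Real.pi * θ * (t:ℝ) - α) :=
        Finset.sum_le_sum fun t _ => hbound t
    _ = (c * S).re := hre.symm
    _ ≤ ‖c * S‖ := Complex.re_le_norm _
    _ = ‖S‖ := by rw [norm_mul, hcabs, one_mul]
    _ = _ := by
        rw [hS]
        congr 1
        refine Finset.sum_congr rfl fun t _ => ?_
        rw [hθ]
        push_cast
        ring

lemma abs_exp_ula (g : ℝ) (x : ℝ) :
    ‖Complex.exp (Complex.I * Real.pi * x * g)‖ = 1 := by
  have : Complex.I * Real.pi * (x:ℂ) * (g:ℂ) = Complex.I * ((Real.pi * x * g : ℝ) : ℂ) := by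
    push_cast; ring
  rw [this, abs_exp_I_mul]

lemma sum_abs_sq_ula (T : ℕ) (g : ℝ) :
    ∑ t : Fin T, ‖Complex.exp (Complex.I * Real.pi * (t:ℝ) * g)‖ ^ 2 = (T:ℝ) := by
  have h : ∀ t : Fin T, ‖Complex.exp (Complex.I * Real.pi * (t:ℝ) * g)‖ ^ 2 = 1 := by
    intro t; rw [abs_exp_ula]; norm_num
  rw [Finset.sum_congr rfl fun t _ => h t]
  simp

lemma inner_ula (T : ℕ) (gl gj : ℝ) :
    ∑ t : Fin T, (starRingEnd ℂ) (Complex.exp (Complex.I * Real.pi * (t:ℝ) * gl)) *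
        Complex.exp (Complex.I * Real.pi * (t:ℝ) * gj) =
      ∑ t : Fin T, Complex.exp (Complex.I * Real.pi * (t:ℝ) * ((gj - gl : ℝ) : ℂ)) := by
  refine Finset.sum_congr rfl fun t _ => ?_
  rw [← Complex.exp_conj, ← Complex.exp_add]
  congr 1
  simp only [map_mul, Complex.conj_I, Complex.conj_ofReal]
  push_cast
  ring

lemma main_bound (T Ng : ℕ) (hT : 3 ≤ T) (hNg : Ng = T ^ 2 - 1) (gl gj : ℝ)
    (hdiff : gj - gl = 2 / (Ng:ℝ)) :
    subDist (fun t : Fin T => Complex.exp (Complex.I * Real.pi * (t:ℝ) * gl))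
        (fun t : Fin T => Complex.exp (Complex.I * Real.pi * (t:ℝ) * gj)) ≤
      1 - 4 / Real.pi ^ 2 := by
  unfold subDist
  rw [inner_ula, sum_abs_sq_ula, sum_abs_sq_ula]
  rw [hdiff]
  have hA := key_lb T Ng hT hNg
  push_cast at hA ⊢
  set A := ‖∑ t : Fin T, Complex.exp (Complex.I * (Real.pi:ℂ) * ((t:ℕ):ℂ) * (2 / (Ng:ℂ)))‖ with hAdef
  have hTpos : (0:ℝ) < T := by
    have : (3:ℝ) ≤ (T:ℝ) := by exact_mod_cast hT
    linarith
  have hπ := Real.pi_pos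
  have h1 : (0:ℝ) ≤ 2*T/Real.pi := by positivity
  have h2 : 4*(T:ℝ)^2/Real.pi^2 ≤ A^2 := by
    calc 4*(T:ℝ)^2/Real.pi^2 = (2*T/Real.pi)^2 := by rw [div_pow]; ring_nf
      _ ≤ A^2 := pow_le_pow_left₀ h1 hA 2
  have h3 : 4*(T:ℝ)^2 ≤ A^2 * Real.pi^2 := (div_le_iff₀ (by positivity)).mp h2
  have h4 : 4/Real.pi^2 ≤ A^2/((T:ℝ)*(T:ℝ)) := by
    rw [div_le_div_iff₀ (by positivity) (by positivity)]
    nlinarith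
  linarith

lemma subDist_smul {M : ℕ} (c d : ℂ) (hc : c ≠ 0) (hd : d ≠ 0) (u v : Fin M → ℂ) :
    subDist (fun i => c * u i) (fun i => d * v i) = subDist u v := by
  unfold subDist
  have h1 : ∑ i, (starRingEnd ℂ) (c * u i) * (d * v i) =
      (starRingEnd ℂ) c * d * ∑ i, (starRingEnd ℂ) (u i) * v i := by
    rw [Finset.mul_sum]
    exact Finset.sum_congr rfl fun i _ => by rw [map_mul]; ring
  have h2 : ∑ i, ‖c * u i‖ ^ 2 = ‖c‖ ^ 2 * ∑ i, ‖u i‖ ^ 2 := by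
    rw [Finset.mul_sum]
    exact Finset.sum_congr rfl fun i _ => by rw [norm_mul]; ring
  have h3 : ∑ i, ‖d * v i‖ ^ 2 = ‖d‖ ^ 2 * ∑ i, ‖v i‖ ^ 2 := by
    rw [Finset.mul_sum]
    exact Finset.sum_congr rfl fun i _ => by rw [norm_mul]; ring
  rw [h1, h2, h3, norm_mul, norm_mul]
  have hcd : (‖c‖ ^ 2 * ‖d‖ ^ 2 : ℝ) ≠ 0 := by
    have : ‖c‖ ≠ 0 := by simpa using hc
    have : ‖d‖ ≠ 0 := by simpa using hd
    positivity
  congr 1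
  rw [Complex.norm_conj, mul_pow, mul_pow]
  rw [show ‖c‖ ^ 2 * ‖d‖ ^ 2 *
      ‖∑ i, (starRingEnd ℂ) (u i) * v i‖ ^ 2 =
      (‖c‖ ^ 2 * ‖d‖ ^ 2) *
      ‖∑ i, (starRingEnd ℂ) (u i) * v i‖ ^ 2 from by ring,
    show ‖c‖ ^ 2 * (∑ i, ‖u i‖ ^ 2) *
      (‖d‖ ^ 2 * ∑ i, ‖v i‖ ^ 2) =
      (‖c‖ ^ 2 * ‖d‖ ^ 2) *
      ((∑ i, ‖u i‖ ^ 2) * ∑ i, ‖v i‖ ^ 2) from by ring]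
  exact mul_div_mul_left _ _ hcd

lemma mulVec_conv (Na P T : ℕ) (w : Fin P → ℂ) (hNa : (T - 1) + P ≤ Na)
    (g : ℝ) (aU : Fin Na → ℂ)
    (haU : ∀ m : Fin Na, aU m = Complex.exp (Complex.I * Real.pi * (m : ℝ) * g))
    (t : Fin T) :
    (convBeam Na P T w (fun t => (t : ℕ))).mulVec aU t =
      freqResp P w g * Complex.exp (Complex.I * Real.pi * (t : ℝ) * g) := by
  have hlt : ∀ n : Fin P, (t : ℕ) + (n : ℕ) < Na := by
    intro n
    have := t.isLt
    have := n.isLt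
    omega
  rw [Matrix.mulVec, dotProduct]
  simp only [convBeam]
  have hswap : ∑ m : Fin Na, (∑ n : Fin P, if (m : ℕ) = (t:ℕ) + (n : ℕ) then (starRingEnd ℂ) (w n) else 0) * aU m
      = ∑ n : Fin P, ∑ m : Fin Na, (if (m : ℕ) = (t:ℕ) + (n : ℕ) then (starRingEnd ℂ) (w n) else 0) * aU m := by
    rw [← Finset.sum_comm]
    exact Finset.sum_congr rfl fun m _ => by rw [Finset.sum_mul]
  rw [hswap]
  have hinner : ∀ n : Fin P,
      ∑ m : Fin Na, (if (m : ℕ) = (t:ℕ) + (n : ℕ) then (starRingEnd ℂ) (w n) else 0) * aU m =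
      (starRingEnd ℂ) (w n) * aU ⟨(t:ℕ) + (n:ℕ), hlt n⟩ := by
    intro n
    rw [Finset.sum_eq_single (⟨(t:ℕ) + (n:ℕ), hlt n⟩ : Fin Na)]
    · simp
    · intro m _ hm
      rw [if_neg, zero_mul]
      intro h
      exact hm (Fin.ext h)
    · intro h
      exact absurd (Finset.mem_univ _) h
  rw [Finset.sum_congr rfl fun n _ => hinner n]
  rw [freqResp, Finset.sum_mul]
  refine Finset.sum_congr rfl fun n _ => ?_
  rw [haU]
  conv_rhs => rw [mul_assoc, ← Complex.exp_add]
  congr 1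
  simp only [Fin.val_mk]
  push_cast
  ring

/-- With uniform (ULA) shifts `{0,…,T−1}` on the uniform grid with
`N_g = T² − 1`, the minimum subspace distance is at most `1 − 4/π²`; consequently
the convolutional beamspace code with ULA shifts (and a filter response that does
not vanish on the grid) also has minimum subspace distance at most `1 − 4/π²`. -/
theorem stmt_17 (T : ℕ) (hT : 3 ≤ T) (Ng : ℕ) (hNg : Ng = T ^ 2 - 1)
    (f : Fin Ng → ℝ) (hf : ∀ n, f n = -1 + 2 * (n : ℝ) / Ng)
    (aULA : ℝ → Fin T → ℂ)
    (haULA : ∀ g (t : Fin T), aULA g t = Complex.exp (Complex.I * Real.pi * (t : ℝ) * g)) :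
    (∃ l j : Fin Ng, l ≠ j ∧
      1 - ‖∑ t, (starRingEnd ℂ) (aULA (f l) t) * aULA (f j) t‖ ^ 2 / (T : ℝ) ^ 2 ≤
        1 - 4 / Real.pi ^ 2) ∧
    (∀ (Na P : ℕ) (w : Fin P → ℂ), (T - 1) + P ≤ Na →
      (∀ n : Fin Ng, freqResp P w (f n) ≠ 0) →
      ∀ (aU : ℝ → Fin Na → ℂ),
        (∀ g (m : Fin Na), aU g m = Complex.exp (Complex.I * Real.pi * (m : ℝ) * g)) →
        ∃ l j : Fin Ng, l ≠ j ∧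
          subDist ((convBeam Na P T w (fun t => (t : ℕ))).mulVec (aU (f l)))
              ((convBeam Na P T w (fun t => (t : ℕ))).mulVec (aU (f j))) ≤
            1 - 4 / Real.pi ^ 2) := by
  have hT2 : 9 ≤ T ^ 2 := by nlinarith
  have hNg2 : 2 ≤ Ng := by omega
  refine ⟨?_, ?_⟩
  · refine ⟨⟨0, by omega⟩, ⟨1, by omega⟩, by simp [Fin.ext_iff], ?_⟩
    have hdiff : f ⟨1, by omega⟩ - f ⟨0, by omega⟩ = 2 / (Ng:ℝ) := by
      rw [hf, hf]
      norm_num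
    have hmb := main_bound T Ng hT hNg (f ⟨0, by omega⟩) (f ⟨1, by omega⟩) hdiff
    unfold subDist at hmb
    rw [sum_abs_sq_ula, sum_abs_sq_ula] at hmb
    have hTT : (T:ℝ) * (T:ℝ) = (T:ℝ)^2 := (sq ((T:ℝ))).symm
    rw [hTT] at hmb
    simp only [haULA]
    exact hmb
  · intro Na P w hNa hB aU haU
    refine ⟨⟨0, by omega⟩, ⟨1, by omega⟩, by simp [Fin.ext_iff], ?_⟩
    have hdiff : f ⟨1, by omega⟩ - f ⟨0, by omega⟩ = 2 / (Ng:ℝ) := by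
      rw [hf, hf]
      norm_num
    have hWl : (convBeam Na P T w (fun t => (t : ℕ))).mulVec (aU (f ⟨0, by omega⟩)) =
        fun t : Fin T => freqResp P w (f ⟨0, by omega⟩) *
          Complex.exp (Complex.I * Real.pi * (t : ℝ) * (f ⟨0, by omega⟩)) :=
      funext fun t => mulVec_conv Na P T w hNa _ _ (haU _) t
    have hWj : (convBeam Na P T w (fun t => (t : ℕ))).mulVec (aU (f ⟨1, by omega⟩)) =
        fun t : Fin T => freqResp P w (f ⟨1, by omega⟩) *
          Complex.exp (Complex.I * Real.pi * (t : ℝ) * (f ⟨1, by omega⟩)) :=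
      funext fun t => mulVec_conv Na P T w hNa _ _ (haU _) t
    rw [hWl, hWj]
    rw [subDist_smul _ _ (hB _) (hB _)]
    exact main_bound T Ng hT hNg _ _ hdiff
end
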